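/- Let G be the extended discrete Heisenberg group on Z⁴ with multiplication (a₁,b₁,c₁,m₁)(a₂,b₂,c₂,m₂) = (a₁+a₂+m₁b₂, b₁+b₂, c₁+c₂+a₁b₂+½b₂(b₂−1)m₁, m₁+m₂). Then the center Z(G) equals {(0,0,c,0) : c ∈ Z} ≅ Z; the commutator subgroup [G,G] equals {(a,0,c,0) : a,c ∈ Z} ≅ Z ⊕ Z; and [[G,G],G] = Z(G). Consequently G/[G,G] ≅ Z ⊕ Z and [G,G]/[[G,G],G] ≅ Z, so G is nilpotent of class 3. -/

import Mathlib

/-- `halfbb b = ½ b (b − 1)` (an integer for `b ∈ ℤ`). -/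
def halfbb (b : ℤ) : ℤ := b * (b - 1) / 2

lemma halfbb_add (b c : ℤ) : halfbb (b + c) = halfbb b + halfbb c + b * c := by
  obtain ⟨p, hp⟩ := Int.even_mul_succ_self (b - 1)
  obtain ⟨q, hq⟩ := Int.even_mul_succ_self (c - 1)
  obtain ⟨s, hs⟩ := Int.even_mul_succ_self (b + c - 1)
  have hb : b * (b - 1) = p + p := (by ring : b * (b - 1) = (b - 1) * (b - 1 + 1)).trans hp
  have hc : c * (c - 1) = q + q := (by ring : c * (c - 1) = (c - 1) * (c - 1 + 1)).trans hq
  have hsc : (b + c) * (b + c - 1) = s + s :=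
    (by ring : (b + c) * (b + c - 1) = (b + c - 1) * (b + c - 1 + 1)).trans hs
  have hb2 : halfbb b = p := by unfold halfbb; rw [hb]; omega
  have hc2 : halfbb c = q := by unfold halfbb; rw [hc]; omega
  have hsc2 : halfbb (b + c) = s := by unfold halfbb; rw [hsc]; omega
  have key : (b + c) * (b + c - 1) = b * (b - 1) + c * (c - 1) + 2 * (b * c) := by ring
  rw [hb2, hc2, hsc2]
  rw [hb, hc, hsc] at key
  linarith

/-- The extended discrete Heisenberg group `G = Heis(3,ℤ) ⋊ ℤ`, realized on the set
`ℤ⁴` of quadruples `(a, b, c, m)` with multiplication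
`(a₁,b₁,c₁,m₁)(a₂,b₂,c₂,m₂) = (a₁+a₂+m₁b₂, b₁+b₂, c₁+c₂+a₁b₂+½b₂(b₂−1)m₁, m₁+m₂)`. -/
@[ext]
structure ExtHeis where
  a : ℤ
  b : ℤ
  c : ℤ
  m : ℤ

namespace ExtHeis

instance : Mul ExtHeis :=
  ⟨fun x y =>
    ⟨x.a + y.a + x.m * y.b, x.b + y.b,
      x.c + y.c + x.a * y.b + halfbb y.b * x.m, x.m + y.m⟩⟩

instance : One ExtHeis := ⟨⟨0, 0, 0, 0⟩⟩

instance : Inv ExtHeis :=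
  ⟨fun x =>
    ⟨-x.a + x.m * x.b, -x.b,
      -x.c + x.a * x.b - x.m * x.b * x.b + halfbb x.b * x.m, -x.m⟩⟩

@[simp] lemma mul_def (x y : ExtHeis) :
    x * y = ⟨x.a + y.a + x.m * y.b, x.b + y.b,
      x.c + y.c + x.a * y.b + halfbb y.b * x.m, x.m + y.m⟩ := rfl

@[simp] lemma one_def : (1 : ExtHeis) = ⟨0, 0, 0, 0⟩ := rfl

@[simp] lemma inv_def (x : ExtHeis) :
    x⁻¹ = ⟨-x.a + x.m * x.b, -x.b,
      -x.c + x.a * x.b - x.m * x.b * x.b + halfbb x.b * x.m, -x.m⟩ := rfl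

lemma halfbb_zero : halfbb 0 = 0 := rfl

instance : Group ExtHeis where
  mul_assoc x y z := by
    ext
    · simp; ring
    · simp; ring
    · show ((x * y) * z).c = (x * (y * z)).c
      simp only [mul_def]
      rw [halfbb_add]
      ring
    · simp; ring
  one_mul x := by ext <;> simp
  mul_one x := by ext <;> simp [halfbb_zero]
  inv_mul_cancel x := by ext <;> simp <;> ring

end ExtHeis


namespace ExtHeis

open scoped commutatorElement

@[simp] lemma halfbb_zero' : halfbb 0 = 0 := by decide
@[simp] lemma halfbb_one : halfbb 1 = 0 := by decide
@[simp] lemma halfbb_neg_one : halfbb (-1) = 1 := by decide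

/-- The subgroup `{(a,0,c,0)}`. -/
def K : Subgroup ExtHeis where
  carrier := {g | g.b = 0 ∧ g.m = 0}
  one_mem' := by constructor <;> rfl
  mul_mem' := by
    rintro x y ⟨h1, h2⟩ ⟨h3, h4⟩
    constructor <;> simp [h1, h2, h3, h4]
  inv_mem' := by
    rintro x ⟨h1, h2⟩
    constructor <;> simp [h1, h2]

/-- The subgroup `{(0,0,c,0)}`. -/
def Z : Subgroup ExtHeis where
  carrier := {g | g.a = 0 ∧ g.b = 0 ∧ g.m = 0}
  one_mem' := by refine ⟨rfl, rfl, rfl⟩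
  mul_mem' := by
    rintro x y ⟨h1, h2, h3⟩ ⟨h4, h5, h6⟩
    refine ⟨?_, ?_, ?_⟩ <;> simp [h1, h2, h3, h4, h5, h6]
  inv_mem' := by
    rintro x ⟨h1, h2, h3⟩
    refine ⟨?_, ?_, ?_⟩ <;> simp [h1, h2, h3]

lemma mem_K (g : ExtHeis) : g ∈ K ↔ g.b = 0 ∧ g.m = 0 := Iff.rfl
lemma mem_Z (g : ExtHeis) : g ∈ Z ↔ g.a = 0 ∧ g.b = 0 ∧ g.m = 0 := Iff.rfl

lemma comm1 (m b : ℤ) :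
    ⁅(⟨0,0,0,m⟩ : ExtHeis), (⟨0,b,0,0⟩ : ExtHeis)⁆ =
      ⟨m * b, 0, halfbb b * m - m * b * b, 0⟩ := by
  ext <;> simp [commutatorElement_def] <;> ring

lemma comm2 (s : ℤ) :
    ⁅(⟨s,0,0,0⟩ : ExtHeis), (⟨0,1,0,0⟩ : ExtHeis)⁆ = ⟨0, 0, s, 0⟩ := by
  ext <;> simp [commutatorElement_def]

lemma comm_bm (g h : ExtHeis) : ⁅g, h⁆.b = 0 ∧ ⁅g, h⁆.m = 0 := by
  constructor <;> simp [commutatorElement_def] <;> ring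

lemma commutator_eq_K : commutator ExtHeis = K := by
  apply le_antisymm
  · rw [commutator, Subgroup.commutator_le]
    intro g _ h _
    exact (comm_bm g h)
  · rintro ⟨a, b, c, m⟩ ⟨hb, hm⟩
    simp only at hb hm
    subst hb; subst hm
    have h1 : (⟨a, 0, halfbb a - a * a, 0⟩ : ExtHeis) ∈ commutator ExtHeis := by
      have := Subgroup.commutator_mem_commutator (H₁ := (⊤ : Subgroup ExtHeis))
        (H₂ := (⊤ : Subgroup ExtHeis)) (g₁ := (⟨0,0,0,1⟩ : ExtHeis))
        (g₂ := (⟨0,a,0,0⟩ : ExtHeis)) trivial trivial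
      rw [comm1] at this
      rw [commutator]
      convert this using 2 <;> ring
    have h2 : (⟨0, 0, c - (halfbb a - a * a), 0⟩ : ExtHeis) ∈ commutator ExtHeis := by
      have := Subgroup.commutator_mem_commutator (H₁ := (⊤ : Subgroup ExtHeis))
        (H₂ := (⊤ : Subgroup ExtHeis)) (g₁ := (⟨c - (halfbb a - a * a),0,0,0⟩ : ExtHeis))
        (g₂ := (⟨0,1,0,0⟩ : ExtHeis)) trivial trivial
      rw [comm2] at this
      rw [commutator]; exact this
    have := mul_mem h1 h2
    convert this using 1
    ext <;> simp <;> ring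


lemma center_eq_Z : Subgroup.center ExtHeis = Z := by
  ext g
  rw [Subgroup.mem_center_iff, mem_Z]
  constructor
  · intro h
    have h1 := h ⟨0,1,0,0⟩
    have h2 := h ⟨0,0,0,1⟩
    simp [ExtHeis.ext_iff] at h1 h2
    refine ⟨?_, ?_, ?_⟩ <;> omega
  · rintro ⟨h1, h2, h3⟩ h'
    ext <;> simp [h1, h2, h3] <;> ring

lemma commK_top_eq_Z : ⁅K, (⊤ : Subgroup ExtHeis)⁆ = Z := by
  apply le_antisymm
  · rw [Subgroup.commutator_le]
    rintro g ⟨hb, hm⟩ h -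
    refine ⟨?_, (comm_bm g h).1, (comm_bm g h).2⟩
    simp [commutatorElement_def, hb, hm]
  · rintro ⟨a, b, c, m⟩ ⟨h1, h2, h3⟩
    simp only at h1 h2 h3
    subst h1; subst h2; subst h3
    have hK : (⟨c,0,0,0⟩ : ExtHeis) ∈ K := ⟨rfl, rfl⟩
    have := Subgroup.commutator_mem_commutator hK (Subgroup.mem_top (⟨0,1,0,0⟩ : ExtHeis))
    rw [comm2] at this
    exact this

lemma commZ_top : ⁅Subgroup.center ExtHeis, (⊤ : Subgroup ExtHeis)⁆ = ⊥ := by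
  rw [eq_bot_iff, Subgroup.commutator_le]
  rintro g hg h -
  rw [Subgroup.mem_bot, commutatorElement_eq_one_iff_mul_comm]
  exact (Subgroup.mem_center_iff.mp hg h).symm

def ab : ExtHeis →* Multiplicative (ℤ × ℤ) where
  toFun g := Multiplicative.ofAdd (g.b, g.m)
  map_one' := rfl
  map_mul' x y := rfl

lemma ab_surj : Function.Surjective ab := by
  intro z
  exact ⟨⟨0, z.toAdd.1, 0, z.toAdd.2⟩, rfl⟩

lemma ker_ab : ab.ker = commutator ExtHeis := by
  rw [commutator_eq_K]
  ext g
  rw [MonoidHom.mem_ker, mem_K]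
  constructor
  · intro h
    have : ((Multiplicative.ofAdd ((g.b, g.m) : ℤ × ℤ)).toAdd : ℤ × ℤ) = ((1 : Multiplicative (ℤ × ℤ)).toAdd : ℤ × ℤ) := by rw [← h]; rfl
    simpa [Prod.ext_iff] using this
  · rintro ⟨h1, h2⟩
    show Multiplicative.ofAdd ((g.b, g.m) : ℤ × ℤ) = 1
    rw [h1, h2]; rfl

def phi : (commutator ExtHeis) →* Multiplicative ℤ where
  toFun x := Multiplicative.ofAdd (x : ExtHeis).a
  map_one' := rfl
  map_mul' x y := by
    have hx : (x : ExtHeis).m = 0 := ((mem_K _).mp (commutator_eq_K ▸ x.2)).2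
    show Multiplicative.ofAdd ((x : ExtHeis) * (y : ExtHeis)).a = _
    simp only [mul_def, hx, zero_mul, add_zero]
    rfl


end ExtHeis

/-- for the extended discrete Heisenberg group `G`:
the center is `{(0,0,c,0)}`; the commutator subgroup is `{(a,0,c,0)}`;
`[[G,G],G]` equals the center; `G/[G,G] ≅ ℤ ⊕ ℤ`;
`[G,G]/[[G,G],G] ≅ ℤ`; and `G` is nilpotent of class 3. -/
theorem extHeis_center_commutator_nilpotent :
    (∀ g : ExtHeis,
        g ∈ Subgroup.center ExtHeis ↔ g.a = 0 ∧ g.b = 0 ∧ g.m = 0) ∧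
      (∀ g : ExtHeis, g ∈ commutator ExtHeis ↔ g.b = 0 ∧ g.m = 0) ∧
      ⁅commutator ExtHeis, (⊤ : Subgroup ExtHeis)⁆ = Subgroup.center ExtHeis ∧
      Nonempty ((ExtHeis ⧸ commutator ExtHeis) ≃* Multiplicative (ℤ × ℤ)) ∧
      (∃ φ : (commutator ExtHeis) →* Multiplicative ℤ,
        Function.Surjective φ ∧
          ∀ x : (commutator ExtHeis),
            φ x = 1 ↔ (x : ExtHeis) ∈ ⁅commutator ExtHeis, (⊤ : Subgroup ExtHeis)⁆) ∧
      (⊤ : Subgroup ExtHeis).lowerCentralSeries 3 = ⊥ ∧ (⊤ : Subgroup ExtHeis).lowerCentralSeries 2 ≠ ⊥ := by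
  refine ⟨?_, ?_, ?_, ?_, ?_, ?_, ?_⟩
  · intro g
    rw [ExtHeis.center_eq_Z]
    exact ExtHeis.mem_Z g
  · intro g
    rw [ExtHeis.commutator_eq_K]
    exact ExtHeis.mem_K g
  · rw [ExtHeis.commutator_eq_K, ExtHeis.center_eq_Z]
    exact ExtHeis.commK_top_eq_Z
  · exact ⟨(QuotientGroup.quotientMulEquivOfEq ExtHeis.ker_ab.symm).trans
      (QuotientGroup.quotientKerEquivOfSurjective ExtHeis.ab ExtHeis.ab_surj)⟩
  · refine ⟨ExtHeis.phi, ?_, ?_⟩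
    · intro n
      refine ⟨⟨⟨n.toAdd, 0, 0, 0⟩, ?_⟩, rfl⟩
      rw [ExtHeis.commutator_eq_K]
      exact ⟨rfl, rfl⟩
    · intro x
      have h1 : ⁅commutator ExtHeis, (⊤ : Subgroup ExtHeis)⁆ = ExtHeis.Z := by
        rw [ExtHeis.commutator_eq_K]
        exact ExtHeis.commK_top_eq_Z
      rw [h1]
      rw [ExtHeis.mem_Z]
      have hx := (ExtHeis.mem_K _).mp (ExtHeis.commutator_eq_K.le x.2)
      constructor
      · intro h
        have : ((ExtHeis.phi x).toAdd : ℤ) = ((1 : Multiplicative ℤ).toAdd : ℤ) := by rw [h]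
        exact ⟨this, hx.1, hx.2⟩
      · rintro ⟨h1, _, _⟩
        show Multiplicative.ofAdd (x : ExtHeis).a = 1
        rw [h1]; rfl
  · have l1 : (⊤ : Subgroup ExtHeis).lowerCentralSeries 1 = commutator ExtHeis := by
      rw [show (1 : ℕ) = 0 + 1 from rfl, Subgroup.lowerCentralSeries_succ, Subgroup.lowerCentralSeries_zero]
      rfl
    have l2 : (⊤ : Subgroup ExtHeis).lowerCentralSeries 2 = ExtHeis.Z := by
      rw [show (2 : ℕ) = 1 + 1 from rfl, Subgroup.lowerCentralSeries_succ, l1,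
        ExtHeis.commutator_eq_K]
      exact ExtHeis.commK_top_eq_Z
    rw [show (3 : ℕ) = 2 + 1 from rfl, Subgroup.lowerCentralSeries_succ, l2,
      ← ExtHeis.center_eq_Z]
    exact ExtHeis.commZ_top
  · have l1 : (⊤ : Subgroup ExtHeis).lowerCentralSeries 1 = commutator ExtHeis := by
      rw [show (1 : ℕ) = 0 + 1 from rfl, Subgroup.lowerCentralSeries_succ, Subgroup.lowerCentralSeries_zero]
      rfl
    have l2 : (⊤ : Subgroup ExtHeis).lowerCentralSeries 2 = ExtHeis.Z := by
      rw [show (2 : ℕ) = 1 + 1 from rfl, Subgroup.lowerCentralSeries_succ, l1,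
        ExtHeis.commutator_eq_K]
      exact ExtHeis.commK_top_eq_Z
    rw [l2]
    intro h
    have hz : (⟨0, 0, 1, 0⟩ : ExtHeis) ∈ ExtHeis.Z := ⟨rfl, rfl, rfl⟩
    rw [h, Subgroup.mem_bot] at hz
    simp [ExtHeis.ext_iff] at hz
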